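/- Let n ≥ 2, H ∈ ℝ, λ ∈ ℝ, p ∈ ℝ with p ≠ 1, and R ≥ 0 with λR^{p−1} < H². Suppose Y : [0,∞) → ℝⁿ is a twice continuously differentiable solution of D_t²Y(t) − H²Y(t) + λ|Y(t)|^{p−1}Y(t) = 0 with Y³ = ⋯ = Yⁿ ≡ 0 and |Y(t)| = R for all t ≥ 0. Then Y ≡ 0 (in particular R = 0). -/

import Mathlib

open Set

/-- In the de Sitter spacetime, if `λR^{p-1} < H²`, then the only planar solution of
`D_t²Y - H²Y + λ|Y|^{p-1}Y = 0` on `[0,∞)` with constant norm `|Y(t)| = R` is `Y ≡ 0`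
(in particular `R = 0`). -/
theorem stmt_10 (n : ℕ) (hn : 2 ≤ n) (H lam p R : ℝ)
    (hp : p ≠ 1) (hR : 0 ≤ R) (hRlt : lam * R ^ (p - 1) < H ^ 2)
    (Y Y' : ℝ → EuclideanSpace ℝ (Fin n))
    (hY1 : ∀ t ∈ Ici (0 : ℝ), HasDerivWithinAt Y (Y' t) (Ici (0 : ℝ)) t)
    (hY2 : ∀ t ∈ Ici (0 : ℝ), HasDerivWithinAt Y'
      (H ^ 2 • Y t - (lam * ‖Y t‖ ^ (p - 1)) • Y t) (Ici (0 : ℝ)) t)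
    (hYc : ContinuousOn Y' (Ici (0 : ℝ)))
    (hplanar : ∀ t ∈ Ici (0 : ℝ), ∀ i : Fin n, 2 ≤ (i : ℕ) → Y t i = 0)
    (hnorm : ∀ t ∈ Ici (0 : ℝ), ‖Y t‖ = R) :
    (∀ t ∈ Ici (0 : ℝ), Y t = 0) ∧ R = 0 := by
  have hud : UniqueDiffOn ℝ (Ici (0 : ℝ)) := uniqueDiffOn_Ici 0
  -- inner product ⟨Y, Y⟩ is constant R²
  have hYY : ∀ t ∈ Ici (0 : ℝ), inner ℝ (Y t) (Y t) = (R ^ 2 : ℝ) := by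
    intro t ht
    rw [real_inner_self_eq_norm_sq, hnorm t ht]
  -- derivative of ⟨Y, Y⟩
  have hd1 : ∀ t ∈ Ici (0 : ℝ), HasDerivWithinAt
      (fun s => (inner ℝ (Y s) (Y s) : ℝ)) (2 * inner ℝ (Y t) (Y' t)) (Ici 0) t := by
    intro t ht
    have := (hY1 t ht).inner ℝ (hY1 t ht)
    refine this.congr_deriv ?_
    rw [real_inner_comm (Y' t) (Y t)]
    ring
  -- ⟨Y, Y⟩ constant ⇒ ⟨Y, Y'⟩ = 0 on Ici 0
  have hg0 : ∀ t ∈ Ici (0 : ℝ), (inner ℝ (Y t) (Y' t) : ℝ) = 0 := by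
    intro t ht
    have hconst : HasDerivWithinAt (fun s => (inner ℝ (Y s) (Y s) : ℝ)) 0 (Ici 0) t :=
      (hasDerivWithinAt_const t _ (R ^ 2)).congr hYY (hYY t ht)
    have := (hd1 t ht).derivWithin (hud t ht)
    rw [hconst.derivWithin (hud t ht)] at this
    linarith
  -- derivative of ⟨Y, Y'⟩ at 0
  have h0 : (0 : ℝ) ∈ Ici (0 : ℝ) := self_mem_Ici
  have hd2 : HasDerivWithinAt (fun s => (inner ℝ (Y s) (Y' s) : ℝ))
      (inner ℝ (Y 0) (H ^ 2 • Y 0 - (lam * ‖Y 0‖ ^ (p - 1)) • Y 0) + inner ℝ (Y' 0) (Y' 0))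
      (Ici 0) 0 := by
    exact (hY1 0 h0).inner ℝ (hY2 0 h0)
  have hzero : HasDerivWithinAt (fun s => (inner ℝ (Y s) (Y' s) : ℝ)) 0 (Ici 0) 0 :=
    (hasDerivWithinAt_const 0 _ (0 : ℝ)).congr hg0 (hg0 0 h0)
  have heq : inner ℝ (Y 0) (H ^ 2 • Y 0 - (lam * ‖Y 0‖ ^ (p - 1)) • Y 0)
      + (inner ℝ (Y' 0) (Y' 0) : ℝ) = 0 := by
    have := hd2.derivWithin (hud 0 h0)
    rw [hzero.derivWithin (hud 0 h0)] at this
    linarith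
  -- compute the inner product
  have hval : (inner ℝ (Y 0) (H ^ 2 • Y 0 - (lam * ‖Y 0‖ ^ (p - 1)) • Y 0) : ℝ)
      = (H ^ 2 - lam * R ^ (p - 1)) * R ^ 2 := by
    rw [inner_sub_right, real_inner_smul_right, real_inner_smul_right,
      hYY 0 h0, hnorm 0 h0]
    ring
  have hc : 0 < H ^ 2 - lam * R ^ (p - 1) := by linarith
  have hY'0 : (0 : ℝ) ≤ inner ℝ (Y' 0) (Y' 0) := real_inner_self_nonneg
  have hR2 : R ^ 2 ≤ 0 := by
    nlinarith [heq, hval, hY'0]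
  have hR0 : R = 0 := by nlinarith
  refine ⟨fun t ht => ?_, hR0⟩
  have := hnorm t ht
  rw [hR0] at this
  exact norm_eq_zero.mp this
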